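/- arXiv:2008.10871 — 2 statements merged into one kernel-verified Lean document; each statement's English description precedes it below -/
import Mathlib

section
/- Let H_0 be self-adjoint with an isolated eigenvalue λ_0 of finite multiplicity, P_0 the spectral projection onto its eigenspace, P_0^⊥ = 1 - P_0, γ_0 the spectral gap of λ_0, and H_{0,α} := P_0^⊥(H_0+α)P_0^⊥ restricted to Ran P_0^⊥, with H_0 + α > 0. Then for λ ∈ ℂ with Re λ ∈ [λ_0 - γ_0/2, λ_0 + γ_0/2], the operator |1 - (λ+α) H_{0,α}^{-1}| on Ran P_0^⊥ is bounded below by γ_0/(2λ_∘), where λ_∘ = λ_0 + γ_0 + α. -/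
lemma key_ineq (lam0 γ0 α x r : ℝ) (hγ : 0 < γ0) (hα : 0 < lam0 + α)
    (hx1 : -α ≤ x) (hx2 : γ0 ≤ |x - lam0|)
    (hr1 : lam0 - γ0 / 2 ≤ r) (hr2 : r ≤ lam0 + γ0 / 2) :
    γ0 / (2 * (lam0 + γ0 + α)) * (x + α) ≤ |x - r| := by
  have hL : 0 < lam0 + γ0 + α := by linarith
  rw [div_mul_eq_mul_div, div_le_iff₀ (by linarith)]
  rcases le_or_gt x lam0 with hc | hc
  · have h2 : γ0 ≤ lam0 - x := by
      rcases abs_cases (x - lam0) with ⟨h, _⟩ | ⟨h, _⟩ <;> linarith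
    have : x - r ≤ -(γ0/2) := by linarith
    calc γ0 * (x + α) ≤ γ0 * (lam0 - γ0 + α) := by nlinarith
      _ ≤ (γ0/2) * (2*(lam0 + γ0 + α)) := by nlinarith
      _ ≤ |x - r| * (2*(lam0 + γ0 + α)) := by
          have : γ0/2 ≤ |x - r| := by
            rw [abs_sub_comm]; exact le_trans (by linarith) (le_abs_self _)
          nlinarith
  · have h2 : γ0 ≤ x - lam0 := by
      rcases abs_cases (x - lam0) with ⟨h, _⟩ | ⟨h, _⟩ <;> linarith
    have h3 : x - r ≤ |x - r| := le_abs_self _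
    nlinarith

/-- Lower bound for `|1 - (λ+α)·H_{0,α}^{-1}|` on `Ran P₀^⊥`: here `A` is the
restriction of `H₀` to `Ran P₀^⊥`, a self-adjoint operator whose spectrum lies
in `[-α,∞) \ (λ₀-γ₀, λ₀+γ₀)`, and `A + α` is invertible.  Since
`‖ |B| u ‖ = ‖B u‖`, the lower bound on the operator modulus is stated as a
norm lower bound. -/
theorem stmt_3 {Y : Type*} [NormedAddCommGroup Y] [InnerProductSpace ℂ Y] [CompleteSpace Y]
    (A : Y →L[ℂ] Y) (hA : IsSelfAdjoint A)
    (lam0 γ0 α : ℝ) (hγ : 0 < γ0) (hα : 0 < lam0 + α)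
    (hspec : spectrum ℂ A ⊆ {z : ℂ | ∃ x : ℝ, z = (x : ℂ) ∧ -α ≤ x ∧ γ0 ≤ |x - lam0|})
    (hunit : IsUnit (A + (α : ℂ) • 1))
    (lam : ℂ) (hlam : lam.re ∈ Set.Icc (lam0 - γ0 / 2) (lam0 + γ0 / 2)) :
    ∀ u : Y,
      γ0 / (2 * (lam0 + γ0 + α)) * ‖u‖
        ≤ ‖(1 - (lam + (α : ℂ)) • ((hunit.unit⁻¹ : (Y →L[ℂ] Y)ˣ) : Y →L[ℂ] Y)) u‖ := by
  have hL : (0:ℝ) < lam0 + γ0 + α := by linarith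
  set c : ℝ := γ0 / (2 * (lam0 + γ0 + α)) with hc
  have hcpos : 0 < c := div_pos hγ (by linarith)
  have hnormal : IsStarNormal A := hA.isStarNormal
  -- -α not in spectrum
  have hneg : -(α:ℂ) ∉ spectrum ℂ A := by
    intro h
    have h0 : (0:ℂ) ∈ spectrum ℂ (A + (α:ℂ) • 1) := by
      rw [← Algebra.algebraMap_eq_smul_one, ← spectrum.add_singleton_eq]
      exact ⟨-(α:ℂ), h, (α:ℂ), rfl, by ring⟩
    exact spectrum.zero_notMem ℂ hunit h0
  -- spectrum facts
  have hsp : ∀ z ∈ spectrum ℂ A, ∃ x : ℝ, z = (x:ℂ) ∧ 0 < x + α ∧ γ0 ≤ |x - lam0| := by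
    intro z hz
    obtain ⟨x, rfl, hx1, hx2⟩ := hspec hz
    refine ⟨x, rfl, ?_, hx2⟩
    rcases lt_or_eq_of_le hx1 with h | h
    · linarith
    · exact absurd (h ▸ hz) (by push_cast; exact hneg)
  -- the function
  set f : ℂ → ℂ := fun z => 1 - (lam + (α:ℂ)) * (z + (α:ℂ))⁻¹ with hf
  have hne : ∀ z ∈ spectrum ℂ A, z + (α:ℂ) ≠ 0 := by
    intro z hz
    obtain ⟨x, rfl, hx, _⟩ := hsp z hz
    rw [← Complex.ofReal_add]
    exact_mod_cast ne_of_gt (by exact_mod_cast hx)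
  have hcont : ContinuousOn f (spectrum ℂ A) :=
    continuousOn_const.sub (continuousOn_const.mul
      (((continuous_id.add continuous_const).continuousOn).inv₀ hne))
  -- lower bound on |f z|
  have hbound : ∀ z ∈ spectrum ℂ A, c ≤ ‖f z‖ := by
    intro z hz
    obtain ⟨x, rfl, hx, hx2⟩ := hsp z hz
    have hxa : ((x:ℂ) + α) ≠ 0 := hne _ hz
    have heq : f (x:ℂ) = ((x:ℂ) - lam) / ((x:ℂ) + α) := by
      show 1 - (lam + (α:ℂ)) * ((x:ℂ) + (α:ℂ))⁻¹ = _
      rw [eq_div_iff hxa, sub_mul, mul_assoc, inv_mul_cancel₀ hxa]; ring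
    rw [heq, norm_div]
    have h1 : ‖(x:ℂ) + (α:ℂ)‖ = x + α := by
      rw [← Complex.ofReal_add, Complex.norm_real]; exact abs_of_pos hx
    rw [h1, le_div_iff₀ hx]
    have h2 : |x - lam.re| ≤ ‖(x:ℂ) - lam‖ := by
      have := Complex.abs_re_le_norm ((x:ℂ) - lam)
      simpa using this
    exact le_trans (key_ineq lam0 γ0 α x lam.re hγ hα (by linarith) hx2 hlam.1 hlam.2) h2
  have hfne : ∀ z ∈ spectrum ℂ A, f z ≠ 0 := fun z hz h =>
    absurd (h ▸ hbound z hz) (by simpa using hcpos)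
  -- identify the operator with cfc f A
  have hinvcont : ContinuousOn (fun z : ℂ => (z + (α:ℂ))⁻¹) (spectrum ℂ A) :=
    ((continuous_id.add continuous_const).continuousOn).inv₀ hne
  have hR : ((hunit.unit⁻¹ : (Y →L[ℂ] Y)ˣ) : Y →L[ℂ] Y) = cfc (fun z => (z + (α:ℂ))⁻¹) A := by
    have h1 : cfc (fun z : ℂ => z + (α:ℂ)) A = A + (α:ℂ) • 1 := by
      have h := cfc_add_const (R := ℂ) (α:ℂ) id A (by fun_prop)
      simpa [cfc_id ℂ A, Algebra.algebraMap_eq_smul_one] using h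
    have h2 : cfc (fun z : ℂ => (z + (α:ℂ))⁻¹) A = Ring.inverse (cfc (fun z : ℂ => z + (α:ℂ)) A) :=
      cfc_inv _ A hne
    have h3 := Ring.inverse_unit hunit.unit
    rw [hunit.unit_spec] at h3
    rw [h2, h1]
    exact h3.symm
  have hT : (1 - (lam + (α : ℂ)) • ((hunit.unit⁻¹ : (Y →L[ℂ] Y)ˣ) : Y →L[ℂ] Y)) = cfc f A := by
    rw [hR]
    have h3 : cfc f A = cfc (fun _ : ℂ => (1:ℂ)) A
        - cfc (fun z : ℂ => (lam + (α:ℂ)) * (z + (α:ℂ))⁻¹) A :=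
      cfc_sub _ _ A continuousOn_const (continuousOn_const.mul hinvcont)
    rw [h3, cfc_const_mul _ _ A hinvcont, cfc_const _ A, map_one]
  -- inverse operator
  set W : Y →L[ℂ] Y := cfc (fun z => (f z)⁻¹) A with hW
  have hWT : W * cfc f A = 1 := by
    rw [hW, ← cfc_mul (fun z => (f z)⁻¹) f A (hcont.inv₀ hfne) hcont, ← cfc_one ℂ A]
    exact cfc_congr fun z hz => inv_mul_cancel₀ (hfne z hz)
  have hWnorm : ‖W‖ ≤ c⁻¹ := by
    apply norm_cfc_le (by positivity)
    intro z hz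
    rw [norm_inv]
    exact inv_anti₀ hcpos (hbound z hz)
  intro u
  have hu : u = W ((cfc f A) u) := by
    have := congrArg (fun (B : Y →L[ℂ] Y) => B u) hWT
    simpa using this.symm
  have : ‖u‖ ≤ c⁻¹ * ‖(cfc f A) u‖ := by
    calc ‖u‖ = ‖W ((cfc f A) u)‖ := by rw [← hu]
      _ ≤ ‖W‖ * ‖(cfc f A) u‖ := W.le_opNorm _
      _ ≤ c⁻¹ * ‖(cfc f A) u‖ := by
          exact mul_le_mul_of_nonneg_right hWnorm (norm_nonneg _)
  rw [hT]
  calc c * ‖u‖ ≤ c * (c⁻¹ * ‖(cfc f A) u‖) := by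
        exact mul_le_mul_of_nonneg_left this (le_of_lt hcpos)
    _ = ‖(cfc f A) u‖ := by field_simp
end

section
/- Let H be a self-adjoint operator on a Hilbert space, P an orthogonal projection with complement P^⊥ = 1 - P, such that H^⊥ := P^⊥ H P^⊥ - λ is invertible on Ran P^⊥. Then λ is an eigenvalue of H with eigenvector ψ if and only if F_P(H - λ)φ = 0 where φ = Pψ and F_P(H-λ) := P(H - λ - H P^⊥(H^⊥ - λ)^{-1}P^⊥ H)P; moreover ψ is recovered from φ via ψ = (P - P^⊥(H^⊥-λ)^{-1}P^⊥ H P)φ, and dim ker(H - λ) = dim ker F_P(H - λ). -/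
/-- Isospectrality of the Feshbach–Schur map: `H` self-adjoint, `P` an
orthogonal projection with complement `Pp = 1 - P`, and `G` the inverse on
`Ran Pp` of `Pp H Pp - λ`.  With
`F = P (H - λ - H G H) P` and the lifting map `Q = P - G ∘ H ∘ P`:
eigenvectors of `H` for `λ` project to zeros of `F` (and are recovered by `Q`),
zeros of `F` in `Ran P` lift to eigenvectors of `H`, and the kernels have the
same dimension. -/
theorem stmt_19 {X : Type*} [NormedAddCommGroup X] [InnerProductSpace ℂ X] [CompleteSpace X]
    (H P : X →L[ℂ] X) (lam : ℂ)
    (hH : IsSelfAdjoint H) (hP : IsSelfAdjoint P) (hPidem : P ∘L P = P)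
    (G : X →L[ℂ] X)
    (hG : G = (1 - P) ∘L G ∘L (1 - P))
    (hG1 : ((1 - P) ∘L H ∘L (1 - P) - lam • (1 - P)) ∘L G = 1 - P)
    (hG2 : G ∘L ((1 - P) ∘L H ∘L (1 - P) - lam • (1 - P)) = 1 - P) :
    (∀ ψ : X, H ψ = lam • ψ →
        (P ∘L (H - lam • 1) ∘L P - P ∘L H ∘L G ∘L H ∘L P) (P ψ) = 0 ∧
          (P - G ∘L H ∘L P) (P ψ) = ψ) ∧
      (∀ φ : X, P φ = φ →
        (P ∘L (H - lam • 1) ∘L P - P ∘L H ∘L G ∘L H ∘L P) φ = 0 →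
          H ((P - G ∘L H ∘L P) φ) = lam • ((P - G ∘L H ∘L P) φ)) ∧
      Module.rank ℂ (LinearMap.ker ((H - lam • 1 : X →L[ℂ] X) : X →ₗ[ℂ] X))
        = Module.rank ℂ
            ↥(LinearMap.ker
              ((P ∘L (H - lam • 1) ∘L P - P ∘L H ∘L G ∘L H ∘L P : X →L[ℂ] X) : X →ₗ[ℂ] X)
              ⊓ LinearMap.range ((P : X →L[ℂ] X) : X →ₗ[ℂ] X)) := by
  clear hH hP
  have hPmul : (P : X →L[ℂ] X) * P = P := hPidem
  have hPpPp : ((1 : X →L[ℂ] X) - P) * (1 - P) = 1 - P := by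
    rw [sub_mul, one_mul, mul_sub, mul_one, hPmul]; abel
  have hGm : G = ((1 : X →L[ℂ] X) - P) * (G * (1 - P)) := hG
  have hGPp : G * ((1 : X →L[ℂ] X) - P) = G := by
    conv_lhs => rw [hGm]
    rw [mul_assoc ((1 : X →L[ℂ] X) - P), mul_assoc G, hPpPp, ← hGm]
  have hPpG : ((1 : X →L[ℂ] X) - P) * G = G := by
    conv_lhs => rw [hGm]
    rw [← mul_assoc, hPpPp, ← hGm]
  have hPPp : (P : X →L[ℂ] X) * (1 - P) = 0 := by
    rw [mul_sub, mul_one, hPmul, sub_self]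
  have hPG : (P : X →L[ℂ] X) * G = 0 := by
    rw [← hPpG, ← mul_assoc, hPPp, zero_mul]
  -- pointwise facts
  have hPP : ∀ x, P (P x) = P x := fun x => DFunLike.congr_fun hPidem x
  have hPGx : ∀ x, P (G x) = 0 := fun x => by
    have := DFunLike.congr_fun hPG x; simpa using this
  have hGsub : ∀ x, G (x - P x) = G x := fun x => by
    have := DFunLike.congr_fun hGPp x; simpa using this
  -- key 1
  have key0 : ∀ ψ : X, H ψ = lam • ψ → G (H (P ψ)) = P ψ - ψ := by
    intro ψ hψ
    have hA := DFunLike.congr_fun hG2 ψ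
    simp only [ContinuousLinearMap.comp_apply, ContinuousLinearMap.sub_apply,
      ContinuousLinearMap.smul_apply, ContinuousLinearMap.one_apply] at hA
    have harg : H (ψ - P ψ) - P (H (ψ - P ψ)) - lam • (ψ - P ψ)
        = -(H (P ψ) - P (H (P ψ))) := by
      simp only [map_sub, map_smul, hψ]
      module
    rw [harg, map_neg, hGsub (H (P ψ))] at hA
    linear_combination (norm := module) -hA
  have key1 : ∀ ψ : X, H ψ = lam • ψ →
      (P ∘L (H - lam • 1) ∘L P - P ∘L H ∘L G ∘L H ∘L P) (P ψ) = 0 ∧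
        (P - G ∘L H ∘L P) (P ψ) = ψ := by
    intro ψ hψ
    have hGH := key0 ψ hψ
    constructor
    · simp only [ContinuousLinearMap.sub_apply, ContinuousLinearMap.comp_apply,
        ContinuousLinearMap.smul_apply, ContinuousLinearMap.one_apply, hPP, hGH]
      simp only [map_sub, map_smul, hψ, hPP]
      module
    · simp only [ContinuousLinearMap.sub_apply, ContinuousLinearMap.comp_apply, hPP, hGH]
      abel
  -- key 2
  have key2 : ∀ φ : X, P φ = φ →
      (P ∘L (H - lam • 1) ∘L P - P ∘L H ∘L G ∘L H ∘L P) φ = 0 →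
        H ((P - G ∘L H ∘L P) φ) = lam • ((P - G ∘L H ∘L P) φ) := by
    intro φ hφ hF
    simp only [ContinuousLinearMap.sub_apply, ContinuousLinearMap.comp_apply,
      ContinuousLinearMap.smul_apply, ContinuousLinearMap.one_apply, hφ] at hF ⊢
    have hB := DFunLike.congr_fun hG1 (H φ)
    simp only [ContinuousLinearMap.comp_apply, ContinuousLinearMap.sub_apply,
      ContinuousLinearMap.smul_apply, ContinuousLinearMap.one_apply, hPGx, sub_zero] at hB
    simp only [map_sub, map_smul, hφ] at hF ⊢
    linear_combination (norm := module) hF - hB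
  refine ⟨key1, key2, ?_⟩
  -- rank part
  set F : X →L[ℂ] X := P ∘L (H - lam • 1) ∘L P - P ∘L H ∘L G ∘L H ∘L P with hFdef
  set Q : X →L[ℂ] X := P - G ∘L H ∘L P with hQdef
  set K1 := LinearMap.ker ((H - lam • 1 : X →L[ℂ] X) : X →ₗ[ℂ] X) with hK1
  set K2 := LinearMap.ker ((F : X →L[ℂ] X) : X →ₗ[ℂ] X)
      ⊓ LinearMap.range ((P : X →L[ℂ] X) : X →ₗ[ℂ] X) with hK2
  have mem1 : ∀ ψ : X, ψ ∈ K1 ↔ H ψ = lam • ψ := by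
    intro ψ
    simp [hK1, LinearMap.mem_ker, sub_eq_zero]
  have memP : ∀ φ : X, φ ∈ LinearMap.range ((P : X →L[ℂ] X) : X →ₗ[ℂ] X) → P φ = φ := by
    rintro φ ⟨y, rfl⟩
    exact hPP y
  have hT1mem : ∀ ψ : X, ψ ∈ K1 → P ψ ∈ K2 := by
    intro ψ hψ
    rw [mem1] at hψ
    exact ⟨(key1 ψ hψ).1, ⟨ψ, rfl⟩⟩
  have hT2mem : ∀ φ : X, φ ∈ K2 → Q φ ∈ K1 := by
    intro φ hφ
    rw [mem1]
    exact key2 φ (memP φ hφ.2) hφ.1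
  let T1 : K1 →ₗ[ℂ] K2 :=
    LinearMap.codRestrict K2 (((P : X →L[ℂ] X) : X →ₗ[ℂ] X).comp K1.subtype)
      (fun x => hT1mem x x.2)
  let T2 : K2 →ₗ[ℂ] K1 :=
    LinearMap.codRestrict K1 (((Q : X →L[ℂ] X) : X →ₗ[ℂ] X).comp K2.subtype)
      (fun x => hT2mem x x.2)
  have h12 : T1.comp T2 = LinearMap.id := by
    ext φ
    have hPφ : P (φ : X) = (φ : X) := memP _ φ.2.2
    simp only [LinearMap.comp_apply, LinearMap.codRestrict_apply, LinearMap.id_apply,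
      ContinuousLinearMap.coe_coe, Submodule.coe_subtype, T1, T2]
    show P (Q (φ : X)) = (φ : X)
    simp only [hQdef, ContinuousLinearMap.sub_apply, ContinuousLinearMap.comp_apply,
      map_sub, hPP, hPGx, hPφ, sub_zero]
  have h21 : T2.comp T1 = LinearMap.id := by
    ext ψ
    have hψ : H (ψ : X) = lam • (ψ : X) := (mem1 _).mp ψ.2
    simp only [LinearMap.comp_apply, LinearMap.codRestrict_apply, LinearMap.id_apply,
      ContinuousLinearMap.coe_coe, Submodule.coe_subtype, T1, T2]
    show Q (P (ψ : X)) = (ψ : X)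
    exact (key1 _ hψ).2
  exact LinearEquiv.rank_eq (LinearEquiv.ofLinear T1 T2 h12 h21)
end
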